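/- Let M_1, M_2, …, M_k be finitely many hom-noetherian right R-hom-modules over a non-unital hom-associative ring R. Then the direct sum M_1 ⊕ … ⊕ M_k, with componentwise scalar multiplication and componentwise twisting map, is a hom-noetherian right R-hom-module. -/

import Mathlib

/-- A non-unital hom-associative ring structure on an additive abelian group `R`:
a biadditive multiplication `mul` and an additive twisting map `α` satisfying
`α a * (b * c) = (a * b) * α c`. -/
structure IsHomRing {R : Type*} [AddCommGroup R] (mul : R → R → R) (α : R → R) : Prop where
  add_mul : ∀ a b c : R, mul (a + b) c = mul a c + mul b c
  mul_add : ∀ a b c : R, mul a (b + c) = mul a b + mul a c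
  alpha_add : ∀ a b : R, α (a + b) = α a + α b
  hom_assoc : ∀ a b c : R, mul (α a) (mul b c) = mul (mul a b) (α c)

/-- A right `R`-hom-module structure on an additive abelian group `M`:
a biadditive scalar multiplication `smul : M → R → M` and an additive map `αM`
satisfying `αM m • (r * s) = (m • r) • αR s`. -/
structure IsHomModule {R M : Type*} [AddCommGroup R] [AddCommGroup M]
    (mul : R → R → R) (αR : R → R) (smul : M → R → M) (αM : M → M) : Prop where
  add_smul : ∀ (m n : M) (r : R), smul (m + n) r = smul m r + smul n r
  smul_add : ∀ (m : M) (r s : R), smul m (r + s) = smul m r + smul m s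
  alpha_add : ∀ m n : M, αM (m + n) = αM m + αM n
  hom_assoc : ∀ (m : M) (r s : R), smul (αM m) (mul r s) = smul (smul m r) (αR s)

/-- A hom-submodule: an additive subgroup (as a set) closed under the scalar
multiplication and invariant under the twisting map. -/
structure IsHomSubmodule {R M : Type*} [AddCommGroup M]
    (smul : M → R → M) (αM : M → M) (N : Set M) : Prop where
  zero_mem : (0 : M) ∈ N
  add_mem : ∀ a b : M, a ∈ N → b ∈ N → a + b ∈ N
  neg_mem : ∀ a : M, a ∈ N → -a ∈ N
  smul_mem : ∀ a : M, a ∈ N → ∀ r : R, smul a r ∈ N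
  alpha_mem : ∀ a : M, a ∈ N → αM a ∈ N

/-- A morphism of right `R`-hom-modules: an additive map commuting with the
twisting maps and preserving scalar multiplication. -/
def IsHomModuleHom {R M M' : Type*} [AddCommGroup M] [AddCommGroup M']
    (smul : M → R → M) (αM : M → M) (smul' : M' → R → M') (αM' : M' → M')
    (f : M → M') : Prop :=
  (∀ a b : M, f (a + b) = f a + f b) ∧ (∀ m : M, f (αM m) = αM' (f m)) ∧
    ∀ (m : M) (r : R), f (smul m r) = smul' (f m) r

/-- A right hom-module is hom-noetherian if it has no infinite strictly
ascending chain of hom-submodules. -/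
def HomNoetherian {R M : Type*} [AddCommGroup M] (smul : M → R → M) (αM : M → M) : Prop :=
  ¬ ∃ c : ℕ → Set M, (∀ n, IsHomSubmodule smul αM (c n)) ∧ ∀ n, c n ⊂ c (n + 1)


section Aux

/-- If there is no infinite strictly ascending chain, then every monotone chain
of hom-submodules stabilizes. -/
theorem homNoetherian_stab {R M : Type*} [AddCommGroup M] {smul : M → R → M} {αM : M → M}
    (hN : HomNoetherian smul αM) (c : ℕ → Set M)
    (hsub : ∀ n, IsHomSubmodule smul αM (c n)) (hmono : Monotone c) :
    ∃ N, ∀ m, N ≤ m → c m = c N := by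
  by_contra h
  push_neg at h
  choose f hf hne using h
  let d : ℕ → ℕ := fun n => Nat.rec 0 (fun _ x => f x) n
  refine hN ⟨fun n => c (d n), fun n => hsub _, fun n => ?_⟩
  have h1 : c (d n) ⊆ c (f (d n)) := hmono (hf (d n))
  exact h1.ssubset_of_ne (hne (d n)).symm

universe u v

/-- Auxiliary form of the main theorem, set up for induction on `k`. -/
theorem directSum_homNoetherian_aux (k : ℕ) :
    ∀ {R : Type u} [AddCommGroup R] (mul : R → R → R) (αR : R → R),
      IsHomRing mul αR →
    ∀ (M : Fin k → Type v) [inst : ∀ i, AddCommGroup (M i)]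
      (smul : ∀ i : Fin k, M i → R → M i) (αs : ∀ i : Fin k, M i → M i),
      (∀ i : Fin k, IsHomModule mul αR (smul i) (αs i)) →
      (∀ i : Fin k, HomNoetherian (smul i) (αs i)) →
    HomNoetherian (fun (x : ∀ i, M i) (r : R) (i : Fin k) => smul i (x i) r)
      (fun (x : ∀ i, M i) (i : Fin k) => αs i (x i)) := by
  induction k with
  | zero =>
    intro R _ mul αR hR M inst smul αs hM hnoeth
    rintro ⟨c, hsub, hstrict⟩
    obtain ⟨x, hx1, hx0⟩ := Set.exists_of_ssubset (hstrict 0)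
    have : x = 0 := Subsingleton.elim x 0
    exact hx0 (this ▸ (hsub 0).zero_mem)
  | succ k ih =>
    intro R _ mul αR hR M inst smul αs hM hnoeth
    rintro ⟨c, hsub, hstrict⟩
    -- basic facts
    have smul0 : ∀ (i : Fin (k+1)) (r : R), smul i 0 r = 0 := by
      intro i r
      have h := (hM i).add_smul 0 0 r
      rw [add_zero] at h
      exact (left_eq_add.mp h)
    have alpha0 : ∀ i : Fin (k+1), αs i 0 = 0 := by
      intro i
      have h := (hM i).alpha_add 0 0
      rw [add_zero] at h
      exact (left_eq_add.mp h)
    have cmono : ∀ n, c n ⊆ c (n+1) := fun n => (hstrict n).subset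
    have cmono' : Monotone c := monotone_nat_of_le_succ cmono
    -- projection to the tail
    let proj : (∀ i : Fin (k+1), M i) → (∀ i : Fin k, M i.succ) := fun x i => x i.succ
    -- the first-coordinate chain
    let I : ℕ → Set (M 0) := fun n => {a | (Fin.cons a 0 : ∀ i, M i) ∈ c n}
    -- the projected chain
    let P : ℕ → Set (∀ i : Fin k, M i.succ) := fun n => proj '' c n
    have cons_zero_eq : (Fin.cons (0 : M 0) (0 : ∀ i : Fin k, M i.succ) : ∀ i, M i) = 0 := by
      funext i
      refine Fin.cases ?_ ?_ i <;> simp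
    have Isub : ∀ n, IsHomSubmodule (smul 0) (αs 0) (I n) := by
      intro n
      constructor
      · show (Fin.cons (0 : M 0) 0 : ∀ i, M i) ∈ c n
        rw [cons_zero_eq]; exact (hsub n).zero_mem
      · intro a b ha hb
        have := (hsub n).add_mem _ _ ha hb
        have heq : (Fin.cons a 0 : ∀ i, M i) + Fin.cons b 0 = Fin.cons (a + b) 0 := by
          funext i
          refine Fin.cases ?_ ?_ i <;> simp
        rwa [heq] at this
      · intro a ha
        have := (hsub n).neg_mem _ ha
        have heq : -(Fin.cons a 0 : ∀ i, M i) = Fin.cons (-a) 0 := by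
          funext i
          refine Fin.cases ?_ ?_ i <;> simp
        rwa [heq] at this
      · intro a ha r
        have := (hsub n).smul_mem _ ha r
        have heq : (fun i => smul i ((Fin.cons a 0 : ∀ i, M i) i) r)
            = (Fin.cons (smul 0 a r) 0 : ∀ i, M i) := by
          funext i
          refine Fin.cases ?_ ?_ i <;> simp [smul0]
        rwa [heq] at this
      · intro a ha
        have := (hsub n).alpha_mem _ ha
        have heq : (fun i => αs i ((Fin.cons a 0 : ∀ i, M i) i))
            = (Fin.cons (αs 0 a) 0 : ∀ i, M i) := by
          funext i
          refine Fin.cases ?_ ?_ i <;> simp [alpha0]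
        rwa [heq] at this
    have Psub : ∀ n, IsHomSubmodule
        (fun (x : ∀ i : Fin k, M i.succ) (r : R) (i : Fin k) => smul i.succ (x i) r)
        (fun (x : ∀ i : Fin k, M i.succ) (i : Fin k) => αs i.succ (x i)) (P n) := by
      intro n
      constructor
      · exact ⟨0, (hsub n).zero_mem, rfl⟩
      · rintro a b ⟨x, hx, rfl⟩ ⟨y, hy, rfl⟩
        exact ⟨x + y, (hsub n).add_mem _ _ hx hy, rfl⟩
      · rintro a ⟨x, hx, rfl⟩
        exact ⟨-x, (hsub n).neg_mem _ hx, rfl⟩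
      · rintro a ⟨x, hx, rfl⟩ r
        exact ⟨_, (hsub n).smul_mem _ hx r, rfl⟩
      · rintro a ⟨x, hx, rfl⟩
        exact ⟨_, (hsub n).alpha_mem _ hx, rfl⟩
    have Imono : Monotone I := monotone_nat_of_le_succ (fun n a ha => cmono n ha)
    have Pmono : Monotone P := monotone_nat_of_le_succ (fun n => Set.image_mono (cmono n))
    -- stabilize both chains
    obtain ⟨N1, hN1⟩ := homNoetherian_stab (hnoeth 0) I Isub Imono
    have tailNoeth := ih mul αR hR (fun i : Fin k => M i.succ)
      (fun i => smul i.succ) (fun i => αs i.succ) (fun i => hM i.succ) (fun i => hnoeth i.succ)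
    obtain ⟨N2, hN2⟩ := homNoetherian_stab tailNoeth P Psub Pmono
    set N := max N1 N2 with hN
    have hIeq : I N = I (N + 1) := by
      rw [hN1 N (le_max_left _ _), hN1 (N + 1) (le_trans (le_max_left _ _) (Nat.le_succ N))]
    have hPeq : P N = P (N + 1) := by
      rw [hN2 N (le_max_right _ _), hN2 (N + 1) (le_trans (le_max_right _ _) (Nat.le_succ N))]
    -- deduce c (N+1) ⊆ c N, contradiction
    refine (hstrict N).not_subset ?_
    intro x hx
    have hpx : proj x ∈ P N := hPeq ▸ ⟨x, hx, rfl⟩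
    obtain ⟨y, hy, hyp⟩ := hpx
    have hz : x - y ∈ c (N + 1) := by
      rw [sub_eq_add_neg]
      exact (hsub (N+1)).add_mem _ _ hx ((hsub (N+1)).neg_mem _ (cmono N hy))
    have hzeq : x - y = (Fin.cons ((x - y) 0) 0 : ∀ i, M i) := by
      funext i
      refine Fin.cases ?_ ?_ i
      · simp
      · intro j
        have : y j.succ = x j.succ := congrFun hyp j
        simp [this]
    have hz0 : (x - y) 0 ∈ I (N + 1) := by
      show (Fin.cons ((x - y) 0) 0 : ∀ i, M i) ∈ c (N + 1)
      rw [← hzeq]; exact hz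
    have hz0' : (x - y) 0 ∈ I N := hIeq ▸ hz0
    have hzN : x - y ∈ c N := by rw [hzeq]; exact hz0'
    have : (x - y) + y ∈ c N := (hsub N).add_mem _ _ hzN hy
    rwa [sub_add_cancel] at this

end Aux

/-- a finite direct sum of hom-noetherian right R-hom-modules, with
componentwise scalar multiplication and componentwise twisting map, is a
hom-noetherian right R-hom-module. -/
theorem directSum_homNoetherian {R : Type*} [AddCommGroup R]
    (mul : R → R → R) (αR : R → R) (hR : IsHomRing mul αR)
    {k : ℕ} {M : Fin k → Type*} [∀ i, AddCommGroup (M i)]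
    (smul : ∀ i : Fin k, M i → R → M i) (αs : ∀ i : Fin k, M i → M i)
    (hM : ∀ i : Fin k, IsHomModule mul αR (smul i) (αs i))
    (hnoeth : ∀ i : Fin k, HomNoetherian (smul i) (αs i)) :
    HomNoetherian (fun (x : ∀ i, M i) (r : R) (i : Fin k) => smul i (x i) r)
      (fun (x : ∀ i, M i) (i : Fin k) => αs i (x i)) :=
  directSum_homNoetherian_aux k mul αR hR M smul αs hM hnoeth
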